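/- Assume that a^V_{k0} > 0 and a^V_{k1} > 0 for all k = 1,…,K (no separation in the validation set), and that min(a_{k0}, a_{k1}) = 0 with max(a_{k0}, a_{k1}) = a_{k•} > 0 for all k = 1,…,K (complete separation in the original data). Then there exists δ > 0 such that the validation deviance D^V is strictly decreasing on (0, δ): for all 0 < λ₁ < λ₂ < δ one has D^V(λ₂) < D^V(λ₁); in particular D^V is not minimized in any right-neighborhood of 0, so its minimizer over (0, ∞), when it exists, is strictly positive. -/

import Mathlib

/-- Validation deviance: training counts `a0, a1`, validation counts `av0, av1`, ridge
probability estimate `π̂_k(λ) = (a_{k1} + 2λ)/(a_{k•} + 4λ)`. -/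
noncomputable def validDev (K : ℕ) (a0 a1 av0 av1 : Fin K → ℕ) (l : ℝ) : ℝ :=
  -2 * ∑ k : Fin K,
    ((av0 k : ℝ) *
        Real.log (1 - ((a1 k : ℝ) + 2 * l) / ((a0 k : ℝ) + (a1 k : ℝ) + 4 * l)) +
     (av1 k : ℝ) *
        Real.log (((a1 k : ℝ) + 2 * l) / ((a0 k : ℝ) + (a1 k : ℝ) + 4 * l)))

/-- No separation in the validation set and complete separation in the original data:
the validation deviance is strictly decreasing on some `(0, δ)`; in particular it has no
minimizer over `(0, ∞)` below `δ`, so any minimizer is strictly positive. -/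
theorem stmt16 (K : ℕ) (hK : 1 ≤ K) (a0 a1 av0 av1 : Fin K → ℕ)
    (hv : ∀ k, 0 < av0 k ∧ 0 < av1 k)
    (hs : ∀ k, min (a0 k) (a1 k) = 0 ∧ max (a0 k) (a1 k) = a0 k + a1 k ∧
      0 < a0 k + a1 k) :
    ∃ δ : ℝ, 0 < δ ∧
      (∀ l1 l2 : ℝ, 0 < l1 → l1 < l2 → l2 < δ →
        validDev K a0 a1 av0 av1 l2 < validDev K a0 a1 av0 av1 l1) ∧
      ∀ lam : ℝ, 0 < lam → lam < δ →
        ¬ (∀ l' : ℝ, 0 < l' →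
            validDev K a0 a1 av0 av1 lam ≤ validDev K a0 a1 av0 av1 l') := by
  classical
  set n : Fin K → ℝ := fun k => (a0 k : ℝ) + (a1 k : ℝ) with hn
  set b : Fin K → ℝ := fun k => if a1 k = 0 then (av1 k : ℝ) else (av0 k : ℝ) with hb
  set c : Fin K → ℝ := fun k => if a1 k = 0 then (av0 k : ℝ) else (av1 k : ℝ) with hc
  have hn1 : ∀ k, 1 ≤ n k := by
    intro k
    have := (hs k).2.2
    have : (1 : ℝ) ≤ ((a0 k + a1 k : ℕ) : ℝ) := by exact_mod_cast this
    simpa [hn, Nat.cast_add] using this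
  have hb1 : ∀ k, 1 ≤ b k := by
    intro k
    rcases hv k with ⟨h0, h1⟩
    by_cases h : a1 k = 0 <;> simp [hb, h] <;> omega
  have hc1 : ∀ k, 1 ≤ c k := by
    intro k
    rcases hv k with ⟨h0, h1⟩
    by_cases h : a1 k = 0 <;> simp [hc, h] <;> omega
  set M : ℕ := Finset.univ.sup (fun k => av0 k + av1 k) with hM
  have hcM : ∀ k, c k ≤ M := by
    intro k
    have hle : av0 k + av1 k ≤ M := Finset.le_sup (f := fun k => av0 k + av1 k) (Finset.mem_univ k)
    have : ((av0 k + av1 k : ℕ) : ℝ) ≤ (M : ℝ) := by exact_mod_cast hle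
    by_cases h : a1 k = 0 <;> simp only [hc, h, if_true, if_false] <;> push_cast at this ⊢ <;> linarith
  set δ : ℝ := 1 / (2 * ((M : ℝ) + 1)) with hδdef
  have hδ : 0 < δ := by positivity
  set G : ℝ → ℝ := fun l => ∑ k : Fin K,
      (b k * Real.log (2 * l) + c k * Real.log (n k + 2 * l)
        - (b k + c k) * Real.log (n k + 4 * l)) with hG
  -- pointwise identification of validDev with -2 * G on l > 0
  have hEq : ∀ l : ℝ, 0 < l → validDev K a0 a1 av0 av1 l = -2 * G l := by
    intro l hl
    unfold validDev
    rw [hG]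
    congr 1
    apply Finset.sum_congr rfl
    intro k _
    have hnk : 1 ≤ n k := hn1 k
    have h2l : (0:ℝ) < 2 * l := by linarith
    have hn2 : (0:ℝ) < n k + 2 * l := by linarith
    have hn4 : (0:ℝ) < n k + 4 * l := by linarith
    rcases Nat.min_eq_zero_iff.mp (hs k).1 with h0 | h1
    · -- a0 k = 0, so a1 k = n
      have ha0 : (a0 k : ℝ) = 0 := by exact_mod_cast h0
      have ha1 : (a1 k : ℝ) = n k := by simp [hn, ha0]
      have hbk : b k = (av0 k : ℝ) := by
        have : a1 k ≠ 0 := by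
          intro h; exact absurd ((hs k).2.2) (by omega)
        simp [hb, this]
      have hck : c k = (av1 k : ℝ) := by
        have : a1 k ≠ 0 := by
          intro h; exact absurd ((hs k).2.2) (by omega)
        simp [hc, this]
      have hpi : ((a1 k : ℝ) + 2 * l) / ((a0 k : ℝ) + (a1 k : ℝ) + 4 * l)
          = (n k + 2 * l) / (n k + 4 * l) := by rw [ha0, ha1]; ring_nf
      have hpi2 : 1 - ((a1 k : ℝ) + 2 * l) / ((a0 k : ℝ) + (a1 k : ℝ) + 4 * l)
          = (2 * l) / (n k + 4 * l) := by
        rw [ha0, ha1]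
        field_simp
        ring
      rw [hpi2, hpi, Real.log_div (ne_of_gt h2l) (ne_of_gt hn4),
        Real.log_div (ne_of_gt hn2) (ne_of_gt hn4), hbk, hck]
      ring
    · -- a1 k = 0, so a0 k = n
      have ha1 : (a1 k : ℝ) = 0 := by exact_mod_cast h1
      have ha0 : (a0 k : ℝ) = n k := by simp [hn, ha1]
      have hbk : b k = (av1 k : ℝ) := by simp [hb, h1]
      have hck : c k = (av0 k : ℝ) := by simp [hc, h1]
      have hpi : ((a1 k : ℝ) + 2 * l) / ((a0 k : ℝ) + (a1 k : ℝ) + 4 * l)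
          = (2 * l) / (n k + 4 * l) := by rw [ha1, ha0]; ring_nf
      have hpi2 : 1 - ((a1 k : ℝ) + 2 * l) / ((a0 k : ℝ) + (a1 k : ℝ) + 4 * l)
          = (n k + 2 * l) / (n k + 4 * l) := by
        rw [ha1, ha0]
        field_simp
        ring
      rw [hpi2, hpi, Real.log_div (ne_of_gt h2l) (ne_of_gt hn4),
        Real.log_div (ne_of_gt hn2) (ne_of_gt hn4), hbk, hck]
      ring
  -- derivative of G
  have hder : ∀ x ∈ Set.Ioo (0:ℝ) δ,
      HasDerivAt G (∑ k : Fin K,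
        (b k * ((2 * x)⁻¹ * 2) + c k * ((n k + 2 * x)⁻¹ * 2)
          - (b k + c k) * ((n k + 4 * x)⁻¹ * 4))) x := by
    intro x hx
    have hxpos : 0 < x := hx.1
    apply HasDerivAt.fun_sum
    intro k _
    have hnk := hn1 k
    have h2x : (2 * x) ≠ 0 := by positivity
    have hn2 : (n k + 2 * x) ≠ 0 := by positivity
    have hn4 : (n k + 4 * x) ≠ 0 := by positivity
    have d1 : HasDerivAt (fun l : ℝ => Real.log (2 * l)) ((2 * x)⁻¹ * 2) x := by
      have : HasDerivAt (fun l : ℝ => 2 * l) 2 x := by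
        simpa using (hasDerivAt_id x).const_mul 2
      exact (Real.hasDerivAt_log h2x).comp x this
    have d2 : HasDerivAt (fun l : ℝ => Real.log (n k + 2 * l)) ((n k + 2 * x)⁻¹ * 2) x := by
      have : HasDerivAt (fun l : ℝ => n k + 2 * l) 2 x := by
        simpa using ((hasDerivAt_id x).const_mul 2).const_add (n k)
      exact (Real.hasDerivAt_log hn2).comp x this
    have d3 : HasDerivAt (fun l : ℝ => Real.log (n k + 4 * l)) ((n k + 4 * x)⁻¹ * 4) x := by
      have : HasDerivAt (fun l : ℝ => n k + 4 * l) 4 x := by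
        simpa using ((hasDerivAt_id x).const_mul 4).const_add (n k)
      exact (Real.hasDerivAt_log hn4).comp x this
    exact ((d1.const_mul (b k)).add (d2.const_mul (c k))).sub (d3.const_mul (b k + c k))
  have hNE : (Finset.univ : Finset (Fin K)).Nonempty := by
    have : Nonempty (Fin K) := ⟨⟨0, hK⟩⟩
    exact Finset.univ_nonempty
  -- G strictly increasing on (0, δ)
  have hMono : StrictMonoOn G (Set.Ioo 0 δ) := by
    apply strictMonoOn_of_deriv_pos (convex_Ioo 0 δ)
    · intro x hx
      exact (hder x hx).continuousAt.continuousWithinAt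
    · intro x hx
      rw [interior_Ioo] at hx
      rw [(hder x hx).deriv]
      apply Finset.sum_pos _ hNE
      intro k _
      have hxpos : 0 < x := hx.1
      have hxδ : x < δ := hx.2
      have hnk := hn1 k
      have hbk := hb1 k
      have hck := hc1 k
      have hcMk := hcM k
      have hn2 : (0:ℝ) < n k + 2 * x := by linarith
      have hn4 : (0:ℝ) < n k + 4 * x := by linarith
      have key : b k * ((2 * x)⁻¹ * 2) + c k * ((n k + 2 * x)⁻¹ * 2)
          - (b k + c k) * ((n k + 4 * x)⁻¹ * 4)
          = n k * (b k * n k + 2 * b k * x - 2 * c k * x)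
            / (x * (n k + 2 * x) * (n k + 4 * x)) := by
        field_simp
        ring
      rw [key]
      apply div_pos
      · have hMx : 2 * c k * x < 1 := by
          have h1 : x < 1 / (2 * ((M : ℝ) + 1)) := hxδ
          have h2 : (0:ℝ) < 2 * ((M : ℝ) + 1) := by positivity
          have h3 : 2 * ((M : ℝ) + 1) * x < 1 := by
            rw [lt_div_iff₀ h2] at h1; linarith [h1]
          nlinarith [hxpos.le, hcMk]
        have hbpos : (0:ℝ) < b k := lt_of_lt_of_le one_pos hbk
        have hnpos : (0:ℝ) < n k := lt_of_lt_of_le one_pos hnk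
        have hbn : (1:ℝ) ≤ b k * n k := by nlinarith
        have hinner : (0:ℝ) < b k * n k + 2 * b k * x - 2 * c k * x := by
          nlinarith [mul_pos hbpos hxpos]
        exact mul_pos hnpos hinner
      · positivity
  refine ⟨δ, hδ, ?_, ?_⟩
  · intro l1 l2 h1 h12 h2δ
    have hG12 : G l1 < G l2 :=
      hMono ⟨h1, lt_trans h12 h2δ⟩ ⟨lt_trans h1 h12, h2δ⟩ h12
    rw [hEq l1 h1, hEq l2 (lt_trans h1 h12)]
    linarith
  · intro lam hlam hlamδ h
    set l' : ℝ := (lam + δ) / 2 with hl'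
    have hl'pos : 0 < l' := by positivity
    have h1 : lam < l' := by rw [hl']; linarith
    have h2 : l' < δ := by rw [hl']; linarith
    have hlt : validDev K a0 a1 av0 av1 l' < validDev K a0 a1 av0 av1 lam := by
      have hGlt : G lam < G l' := hMono ⟨hlam, hlamδ⟩ ⟨hl'pos, h2⟩ h1
      rw [hEq lam hlam, hEq l' hl'pos]
      linarith
    exact absurd (h l' hl'pos) (not_le.2 hlt)
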